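/- Let τ : ℝ → ℝ be continuous and let Y : ℝ → ℂ be a twice differentiable solution of Y'' + τ·Y = 0 with Y(s) ≠ 0 for all s. Let v : ℝ → ℂ be differentiable with v'(s) = −(Y'(s)/(2·Y(s)))·v(s), and define u(s,y) = v(s)·exp(i·(Y'(s)/Y(s))·y²/2) for (s,y) ∈ ℝ². Then u satisfies the parabolic equation i·∂u/∂s + (1/2)·∂²u/∂y² − (1/2)·τ(s)·y²·u = 0. -/

import Mathlib

open Complex

private lemma hasDerivAt_coe (y : ℝ) : HasDerivAt (fun t : ℝ => (t : ℂ)) 1 y := by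
  simpa using (hasDerivAt_id y).ofReal_comp

private lemma hasDerivAt_sq (y : ℝ) :
    HasDerivAt (fun t : ℝ => (t : ℂ) ^ 2) (2 * (y : ℂ)) y := by
  have h := (hasDerivAt_coe y).mul (hasDerivAt_coe y)
  have : (fun t : ℝ => (t : ℂ) ^ 2) = fun t : ℝ => (t : ℂ) * (t : ℂ) := by
    funext t; ring
  rw [this]
  exact h.congr_deriv (by ring)

private lemma gaussDeriv (w c : ℂ) (y : ℝ) :
    HasDerivAt (fun t : ℝ => w * Complex.exp (c * (t : ℂ) ^ 2))
      (w * Complex.exp (c * (y : ℂ) ^ 2) * (c * (2 * (y : ℂ)))) y := by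
  have h := ((((hasDerivAt_sq y).const_mul c).cexp).const_mul w)
  exact h.congr_deriv (by ring)

private lemma gaussDeriv2 (w c : ℂ) (y : ℝ) :
    HasDerivAt (fun t : ℝ => w * Complex.exp (c * (t : ℂ) ^ 2) * (c * (2 * (t : ℂ))))
      (w * Complex.exp (c * (y : ℂ) ^ 2) * (c * (2 * (y : ℂ))) * (c * (2 * (y : ℂ)))
        + w * Complex.exp (c * (y : ℂ) ^ 2) * (c * 2)) y := by
  have hlin : HasDerivAt (fun t : ℝ => c * (2 * (t : ℂ))) (c * 2) y := by
    simpa using ((hasDerivAt_coe y).const_mul 2).const_mul c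
  exact (gaussDeriv w c y).mul hlin

/-- The ground-state Gaussian beam ansatz solves the parabolic equation
`i ∂_s u + (1/2) ∂_y² u − (1/2) τ y² u = 0`. -/
theorem gaussian_beam_ansatz
    (τ : ℝ → ℝ) (hτ : Continuous τ) (Y : ℝ → ℂ)
    (hY : Differentiable ℝ Y) (hY' : Differentiable ℝ (deriv Y))
    (hJacobi : ∀ s, deriv (deriv Y) s + (τ s : ℂ) * Y s = 0)
    (hYne : ∀ s, Y s ≠ 0)
    (v : ℝ → ℂ) (hv : Differentiable ℝ v)
    (hv' : ∀ s, deriv v s = -(deriv Y s / (2 * Y s)) * v s)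
    (u : ℝ → ℝ → ℂ)
    (hu : ∀ s y, u s y
      = v s * Complex.exp (Complex.I * (deriv Y s / Y s) * (y : ℂ) ^ 2 / 2)) :
    ∀ s y : ℝ,
      Complex.I * deriv (fun s' => u s' y) s
        + (1 / 2) * deriv (fun y' => deriv (fun y'' => u s y'') y') y
        - (1 / 2) * (τ s : ℂ) * (y : ℂ) ^ 2 * u s y = 0 := by
  intro s y
  set c : ℂ := Complex.I * (deriv Y s / Y s) / 2 with hc
  -- the y-direction function
  have hfun_y : (fun y'' : ℝ => u s y'') = fun t : ℝ => v s * Complex.exp (c * (t : ℂ) ^ 2) := by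
    funext t
    rw [hu]
    congr 2
    ring
  -- first derivative in y, as a function
  have hdy : deriv (fun y'' : ℝ => u s y'')
      = fun t : ℝ => v s * Complex.exp (c * (t : ℂ) ^ 2) * (c * (2 * (t : ℂ))) := by
    funext t
    rw [hfun_y]
    exact (gaussDeriv (v s) c t).deriv
  -- second derivative in y at y
  have hdyy : deriv (fun y' => deriv (fun y'' => u s y'') y') y
      = v s * Complex.exp (c * (y : ℂ) ^ 2) * (c * (2 * (y : ℂ))) * (c * (2 * (y : ℂ)))
        + v s * Complex.exp (c * (y : ℂ) ^ 2) * (c * 2) := by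
    rw [hdy]
    exact (gaussDeriv2 (v s) c y).deriv
  -- derivative of Γ = Y'/Y
  have hΓ : HasDerivAt (fun s' => deriv Y s' / Y s')
      ((deriv (deriv Y) s * Y s - deriv Y s * deriv Y s) / (Y s) ^ 2) s :=
    ((hY' s).hasDerivAt).div ((hY s).hasDerivAt) (hYne s)
  -- the s-direction function
  have hfun_s : (fun s' : ℝ => u s' y)
      = fun s' => v s' * Complex.exp ((Complex.I * (y : ℂ) ^ 2 / 2) * (deriv Y s' / Y s')) := by
    funext s'
    rw [hu]
    congr 2
    ring
  have hds : deriv (fun s' => u s' y) s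
      = deriv v s * Complex.exp ((Complex.I * (y : ℂ) ^ 2 / 2) * (deriv Y s / Y s))
        + v s * (Complex.exp ((Complex.I * (y : ℂ) ^ 2 / 2) * (deriv Y s / Y s))
            * ((Complex.I * (y : ℂ) ^ 2 / 2)
              * ((deriv (deriv Y) s * Y s - deriv Y s * deriv Y s) / (Y s) ^ 2))) := by
    rw [hfun_s]
    exact ((hv s).hasDerivAt.mul ((hΓ.const_mul (Complex.I * (y : ℂ) ^ 2 / 2)).cexp)).deriv
  -- unify the exponentials
  set E : ℂ := Complex.exp (Complex.I * (deriv Y s / Y s) * (y : ℂ) ^ 2 / 2) with hE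
  have e1 : Complex.exp ((Complex.I * (y : ℂ) ^ 2 / 2) * (deriv Y s / Y s)) = E := by
    rw [hE]; congr 1; ring
  have e2 : Complex.exp (c * (y : ℂ) ^ 2) = E := by
    rw [hE, hc]; congr 1; ring
  have hY'' : deriv (deriv Y) s = -(τ s : ℂ) * Y s := by
    have := hJacobi s; linear_combination this
  rw [hds, hdyy, hu, e1, e2, ← hE, hv' s, hY'', hc]
  field_simp [hYne s]
  ring_nf
  field_simp [Complex.I_sq, hYne s]
  rw [Complex.I_sq]
  ring
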